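/- Fix ℓ ≥ 1 and integers (or elements of any commutative ring) k₁, …, k_ℓ, and for n ≥ ℓ set P_n = ∑ k₁^{i₁}⋯k_ℓ^{i_ℓ} x_{i₁}⋯x_{i_ℓ}, the sum over all tuples (i₁,…,i_ℓ) of positive integers with i₁+⋯+i_ℓ = n (and P_n = 0 for n < ℓ). Then d(P_n) = (k₁ + ⋯ + k_ℓ)·P_{n−1}, where d is the derivation of ℂ[x₁, x₂, …] with d(x₁)=0 and d(xᵢ)=xᵢ₋₁ for i ≥ 2, extended coefficientwise. -/

import Mathlib

open MvPolynomial

noncomputable def x (i : ℕ) : MvPolynomial ℕ ℂ := X (i - 1)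

/-- `P ℓ k n = ∑ k₁^{i₁}⋯k_ℓ^{i_ℓ} x_{i₁}⋯x_{i_ℓ}`, summed over tuples of
positive integers `(i₁,…,i_ℓ)` with `i₁+⋯+i_ℓ = n` (so `P ℓ k n = 0` if `n < ℓ`). -/
noncomputable def P (ℓ : ℕ) (k : Fin ℓ → ℂ) (n : ℕ) : MvPolynomial ℕ ℂ :=
  ∑ i ∈ Finset.filter (fun i : Fin ℓ → ℕ => (∀ j, 1 ≤ i j) ∧ ∑ j, i j = n)
      (Fintype.piFinset fun _ => Finset.range (n + 1)),
    C (∏ j, k j ^ i j) * ∏ j, x (i j)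

lemma d_prod {ι : Type*} [DecidableEq ι] (d : Derivation ℂ (MvPolynomial ℕ ℂ) (MvPolynomial ℕ ℂ))
    (s : Finset ι) (f : ι → MvPolynomial ℕ ℂ) :
    d (∏ j ∈ s, f j) = ∑ j ∈ s, (∏ j' ∈ s.erase j, f j') * d (f j) := by
  induction s using Finset.induction with
  | empty => simp
  | insert a s ha ih =>
    rw [Finset.prod_insert ha, Derivation.leibniz, ih, Finset.sum_insert ha,
      Finset.erase_insert ha, smul_eq_mul, smul_eq_mul, Finset.mul_sum, add_comm]
    congr 1
    apply Finset.sum_congr rfl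
    intro j hj
    rw [Finset.erase_insert_of_ne (by rintro rfl; exact ha hj), Finset.prod_insert
      (fun hmem => ha (Finset.mem_of_mem_erase hmem))]
    ring

/-- `d(P_n) = (k₁ + ⋯ + k_ℓ) · P_{n−1}`. -/
theorem d_P_eq (d : Derivation ℂ (MvPolynomial ℕ ℂ) (MvPolynomial ℕ ℂ))
    (h1 : d (x 1) = 0) (h : ∀ i, 2 ≤ i → d (x i) = x (i - 1))
    (ℓ : ℕ) (hℓ : 1 ≤ ℓ) (k : Fin ℓ → ℂ) (n : ℕ) (hn : ℓ ≤ n) :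
    d (P ℓ k n) = C (∑ j, k j) * P ℓ k (n - 1) := by
  classical
  have hn1 : 1 ≤ n := le_trans hℓ hn
  set S : Finset (Fin ℓ → ℕ) :=
    Finset.filter (fun i : Fin ℓ → ℕ => (∀ j, 1 ≤ i j) ∧ ∑ j, i j = n)
      (Fintype.piFinset fun _ => Finset.range (n + 1)) with hS
  set S' : Finset (Fin ℓ → ℕ) :=
    Finset.filter (fun i : Fin ℓ → ℕ => (∀ j, 1 ≤ i j) ∧ ∑ j, i j = n - 1)
      (Fintype.piFinset fun _ => Finset.range (n - 1 + 1)) with hS'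
  have key : ∀ i ∈ S, d (C (∏ j, k j ^ i j) * ∏ j, x (i j))
      = ∑ j ∈ Finset.univ.filter (fun j => 2 ≤ i j),
          C (∏ j', k j' ^ i j') * ((∏ j' ∈ Finset.univ.erase j, x (i j')) * x (i j - 1)) := by
    intro i hi
    obtain ⟨-, hpos, -⟩ : _ ∧ (∀ j, 1 ≤ i j) ∧ _ := by
      simpa [hS, Finset.mem_filter] using hi
    rw [← smul_eq_C_mul, d.map_smul, d_prod, Finset.smul_sum]
    rw [← Finset.sum_filter_of_ne (p := fun j => 2 ≤ i j)]
    · apply Finset.sum_congr rfl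
      intro j hj
      have h2 : 2 ≤ i j := (Finset.mem_filter.mp hj).2
      rw [h (i j) h2, smul_eq_C_mul]
    · intro j _ hne
      by_contra h2
      have : i j = 1 := by have := hpos j; omega
      rw [this, h1, mul_zero, smul_zero] at hne
      exact hne rfl
  unfold P
  rw [map_sum]
  rw [Finset.sum_congr rfl key, Finset.sum_sigma']
  -- RHS
  have rhs : C (∑ j, k j) * (∑ i ∈ S', C (∏ j, k j ^ i j) * ∏ j, x (i j))
      = ∑ p ∈ S'.sigma (fun _ => (Finset.univ : Finset (Fin ℓ))),
          C (k p.2) * (C (∏ j, k j ^ p.1 j) * ∏ j, x (p.1 j)) := by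
    rw [map_sum, Finset.sum_mul]
    simp_rw [Finset.mul_sum]
    rw [Finset.sum_comm, Finset.sum_sigma']
  rw [rhs]
  apply Finset.sum_nbij' (i := fun p : Σ _ : Fin ℓ → ℕ, Fin ℓ =>
      (⟨Function.update p.1 p.2 (p.1 p.2 - 1), p.2⟩ : Σ _ : Fin ℓ → ℕ, Fin ℓ))
    (j := fun p : Σ _ : Fin ℓ → ℕ, Fin ℓ =>
      (⟨Function.update p.1 p.2 (p.1 p.2 + 1), p.2⟩ : Σ _ : Fin ℓ → ℕ, Fin ℓ))
  · -- hi : maps into S'.sigma univ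
    rintro ⟨i, j⟩ hp
    simp only [hS, hS', Finset.mem_sigma, Finset.mem_filter, Fintype.mem_piFinset,
      Finset.mem_range, Finset.mem_univ, and_true, true_and] at hp ⊢
    obtain ⟨⟨hrange, hpos, hsum⟩, h2⟩ := hp
    have hesum : i j + ∑ j' ∈ Finset.univ \ {j}, i j' = n := by
      rw [← Finset.erase_eq, Finset.add_sum_erase _ _ (Finset.mem_univ j)]; exact hsum
    have hle : ∀ j', j' ≠ j → i j' ≤ ∑ j'' ∈ Finset.univ \ {j}, i j'' := fun j' hne =>
      Finset.single_le_sum (fun _ _ => Nat.zero_le _)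
        (by rw [← Finset.erase_eq]; exact Finset.mem_erase.mpr ⟨hne, Finset.mem_univ j'⟩)
    refine ⟨fun j' => ?_, fun j' => ?_, ?_⟩
    · rcases eq_or_ne j' j with rfl | hne
      · simp only [Function.update_self]; omega
      · rw [Function.update_of_ne hne]; have := hle j' hne; omega
    · rcases eq_or_ne j' j with rfl | hne
      · simp only [Function.update_self]; omega
      · rw [Function.update_of_ne hne]; exact hpos j'
    · rw [Finset.sum_update_of_mem (Finset.mem_univ j)]; omega
  · -- hj
    rintro ⟨i, j⟩ hp
    simp only [hS, hS', Finset.mem_sigma, Finset.mem_filter, Fintype.mem_piFinset,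
      Finset.mem_range, Finset.mem_univ, and_true, true_and] at hp ⊢
    obtain ⟨hrange, hpos, hsum⟩ := hp
    have hle : ∀ j', i j' ≤ n - 1 := by
      intro j'
      have : i j' ≤ ∑ j'', i j'' :=
        Finset.single_le_sum (fun _ _ => Nat.zero_le _) (Finset.mem_univ j')
      omega
    refine ⟨⟨fun j' => ?_, fun j' => ?_, ?_⟩, ?_⟩
    · rcases eq_or_ne j' j with rfl | hne
      · simp only [Function.update_self]; have := hle j'; omega
      · rw [Function.update_of_ne hne]; have := hle j'; omega
    · rcases eq_or_ne j' j with rfl | hne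
      · simp only [Function.update_self]; omega
      · rw [Function.update_of_ne hne]; exact hpos j'
    · rw [Finset.sum_update_of_mem (Finset.mem_univ j)]
      have hesum : i j + ∑ j' ∈ Finset.univ \ {j}, i j' = n - 1 := by
        rw [← Finset.erase_eq, Finset.add_sum_erase _ _ (Finset.mem_univ j)]; exact hsum
      omega
    · rw [Function.update_self]; have := hpos j; omega
  · -- left_inv
    rintro ⟨i, j⟩ hp
    simp only [hS, Finset.mem_sigma, Finset.mem_filter, Finset.mem_univ, true_and] at hp
    have h2 : 2 ≤ i j := hp.2
    have hv : Function.update i j (i j - 1) j + 1 = i j := by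
      rw [Function.update_self]; omega
    rw [hv, Function.update_idem, Function.update_eq_self]
  · -- right_inv
    rintro ⟨i, j⟩ _
    have hv : Function.update i j (i j + 1) j - 1 = i j := by
      rw [Function.update_self]; omega
    rw [hv, Function.update_idem, Function.update_eq_self]
  · -- terms
    rintro ⟨i, j⟩ hp
    simp only [hS, Finset.mem_sigma, Finset.mem_filter, Finset.mem_univ, true_and,
      Fintype.mem_piFinset] at hp
    obtain ⟨⟨-, hpos, -⟩, h2⟩ := hp
    have hk : ∏ j', k j' ^ (Function.update i j (i j - 1)) j'
        = k j ^ (i j - 1) * ∏ j' ∈ Finset.univ \ {j}, k j' ^ i j' := by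
      rw [show (fun j' => k j' ^ (Function.update i j (i j - 1)) j')
          = Function.update (fun j' => k j' ^ i j') j (k j ^ (i j - 1)) from ?_,
        Finset.prod_update_of_mem (Finset.mem_univ j)]
      funext j'
      rcases eq_or_ne j' j with rfl | hne
      · simp
      · rw [Function.update_of_ne hne, Function.update_of_ne hne]
    have hxp : ∏ j', x ((Function.update i j (i j - 1)) j')
        = x (i j - 1) * ∏ j' ∈ Finset.univ \ {j}, x (i j') := by
      rw [show (fun j' => x ((Function.update i j (i j - 1)) j'))
          = Function.update (fun j' => x (i j')) j (x (i j - 1)) from ?_,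
        Finset.prod_update_of_mem (Finset.mem_univ j)]
      funext j'
      rcases eq_or_ne j' j with rfl | hne
      · simp
      · rw [Function.update_of_ne hne, Function.update_of_ne hne]
    have hkk : ∏ j', k j' ^ i j' = k j ^ i j * ∏ j' ∈ Finset.univ \ {j}, k j' ^ i j' := by
      rw [← Finset.erase_eq]; exact (Finset.mul_prod_erase _ _ (Finset.mem_univ j)).symm
    have hpow : k j * k j ^ (i j - 1) = k j ^ i j := by
      rw [← pow_succ']; congr 1; omega
    simp only [hk, hxp, hkk, map_mul, ← hpow, Finset.erase_eq]
    ring
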